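/- Let $k$ be a field of characteristic not 2 or 3, and let $\mathfrak{s}$ be a three-dimensional simple Lie algebra over $k$. Then the space $\mathcal{Z}_{\mathfrak{s}}(\mathfrak{s}) = \{f \in \mathrm{End}(\mathfrak{s}) : f \circ \mathrm{ad}(x) = \mathrm{ad}(x) \circ f \ \forall x \in \mathfrak{s}\}$ of endomorphisms commuting with the adjoint representation is one-dimensional, i.e. consists exactly of the scalar multiples of the identity. -/

import Mathlib

section CommutantAux

variable (k s : Type*) [Field k] [LieRing s] [LieAlgebra k s]

/-- The commutant (centroid) of the adjoint representation. -/
def stmt17Commutant : Subalgebra k (Module.End k s) where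
  carrier := {g : Module.End k s | ∀ x y : s, g ⁅x, y⁆ = ⁅x, g y⁆}
  mul_mem' := fun {a b} ha hb x y => by
    simp only [Module.End.mul_apply, hb x y, ha x (b y)]
  one_mem' := fun x y => rfl
  add_mem' := fun {a b} ha hb x y => by
    simp only [LinearMap.add_apply, ha x y, hb x y, lie_add]
  algebraMap_mem' := fun c x y => by
    simp [Module.algebraMap_end_apply, lie_smul]

variable {k s}

lemma stmt17_mem_iff {g : Module.End k s} :
    g ∈ stmt17Commutant k s ↔ ∀ x y : s, g ⁅x, y⁆ = ⁅x, g y⁆ := Iff.rfl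

lemma stmt17_lie_left {g : Module.End k s} (hg : g ∈ stmt17Commutant k s) (x y : s) :
    g ⁅x, y⁆ = ⁅g x, y⁆ := by
  have := hg y x
  rw [← lie_skew y x, ← lie_skew y (g x), map_neg] at this
  exact neg_injective this

variable [LieAlgebra.IsSimple k s]

/-- A commutant element vanishing somewhere nonzero is zero. -/
lemma stmt17_eq_zero {g : Module.End k s} (hg : g ∈ stmt17Commutant k s)
    {z : s} (hz : z ≠ 0) (hgz : g z = 0) : g = 0 := by
  let I : LieIdeal k s :=
    { toSubmodule := LinearMap.ker g
      lie_mem := fun {x m} hm => by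
        have hm' : g m = 0 := hm
        show ⁅x, m⁆ ∈ LinearMap.ker g
        rw [LinearMap.mem_ker, hg x m, hm', lie_zero] }
  have hzI : z ∈ I := hgz
  rcases LieAlgebra.IsSimple.eq_bot_or_eq_top I with h | h
  · rw [h] at hzI
    exact absurd ((LieSubmodule.mem_bot z).mp hzI) hz
  · ext x
    have : x ∈ I := h ▸ LieSubmodule.mem_top x
    simpa using (show g x = 0 from this)

lemma stmt17_surjective {g : Module.End k s} (hg : g ∈ stmt17Commutant k s)
    (hne : g ≠ 0) : Function.Surjective g := by
  let I : LieIdeal k s :=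
    { toSubmodule := LinearMap.range g
      lie_mem := fun {x m} hm => by
        obtain ⟨n, rfl⟩ := hm
        exact ⟨⁅x, n⁆, (hg x n)⟩ }
  rcases LieAlgebra.IsSimple.eq_bot_or_eq_top I with h | h
  · exfalso
    apply hne
    ext x
    have : g x ∈ I := ⟨x, rfl⟩
    rw [h] at this
    simpa using this
  · intro y
    have : y ∈ I := h ▸ LieSubmodule.mem_top y
    exact this

lemma stmt17_injective {g : Module.End k s} (hg : g ∈ stmt17Commutant k s)
    (hne : g ≠ 0) : Function.Injective g := by
  rw [← LinearMap.ker_eq_bot, Submodule.eq_bot_iff]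
  intro z hz
  by_contra hz0
  exact hne (stmt17_eq_zero hg hz0 hz)

end CommutantAux

/-- For a three-dimensional simple Lie algebra `𝔰` over a field of
characteristic not 2 or 3, the space of endomorphisms commuting with the adjoint
representation consists exactly of the scalar multiples of the identity. -/
theorem stmt_17 (k s : Type*) [Field k] (h2 : (2 : k) ≠ 0) (h3 : (3 : k) ≠ 0)
    [LieRing s] [LieAlgebra k s] [LieAlgebra.IsSimple k s] [Module.Finite k s]
    (hdim : Module.finrank k s = 3) (f : s →ₗ[k] s) :
    (∀ x y : s, f ⁅x, y⁆ = ⁅x, f y⁆) ↔ ∃ c : k, f = c • LinearMap.id := by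
  constructor
  swap
  · rintro ⟨c, rfl⟩ x y
    simp [lie_smul]
  intro hf
  classical
  set C : Subalgebra k (Module.End k s) := stmt17Commutant k s with hCdef
  -- a nonzero element of s (from non-abelianness)
  obtain ⟨x₀, y₀, hxy⟩ : ∃ x y : s, ⁅x, y⁆ ≠ 0 := by
    by_contra h
    push_neg at h
    exact LieAlgebra.IsSimple.non_abelian k (L := s) ⟨h⟩
  have hs : Nontrivial s := nontrivial_of_ne _ _ hxy
  -- C is a field
  have hfield : IsField C := by
    refine ⟨⟨0, 1, ?_⟩, ?_, ?_⟩
    · intro h01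
      have : (1 : Module.End k s) = 0 := by
        simpa using congrArg Subtype.val h01.symm
      obtain ⟨z, hz⟩ := exists_ne (0 : s)
      exact hz (by simpa using congrFun (congrArg DFunLike.coe this) z)
    · intro a b
      apply Subtype.ext
      have hd : (↑(a * b) - ↑(b * a) : Module.End k s) ∈ C := by
        exact sub_mem (a * b).2 (b * a).2
      have hker : (↑(a * b) - ↑(b * a) : Module.End k s) ⁅x₀, y₀⁆ = 0 := by
        have h1 : (a : Module.End k s) ((b : Module.End k s) ⁅x₀, y₀⁆)
            = ⁅(a : Module.End k s) x₀, (b : Module.End k s) y₀⁆ := by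
          rw [b.2 x₀ y₀, stmt17_lie_left a.2]
        have h2 : (b : Module.End k s) ((a : Module.End k s) ⁅x₀, y₀⁆)
            = ⁅(a : Module.End k s) x₀, (b : Module.End k s) y₀⁆ := by
          rw [stmt17_lie_left a.2 x₀ y₀, b.2]
        simp [LinearMap.sub_apply, h1, h2]
      have := stmt17_eq_zero hd hxy hker
      have := sub_eq_zero.mp this
      simpa using this
    · intro a ha
      have haC : (a : Module.End k s) ∈ C := a.2
      have hane : (a : Module.End k s) ≠ 0 := by
        intro h
        exact ha (Subtype.ext h)
      have hbij : Function.Bijective (a : Module.End k s) :=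
        ⟨stmt17_injective haC hane, stmt17_surjective haC hane⟩
      let e : s ≃ₗ[k] s := LinearEquiv.ofBijective (a : Module.End k s) hbij
      have hinv : (e.symm : Module.End k s) ∈ C := by
        intro x y
        apply hbij.1
        have h1 : (a : Module.End k s) ((e.symm : Module.End k s) ⁅x, y⁆) = ⁅x, y⁆ :=
          e.apply_symm_apply _
        have h2 : (a : Module.End k s) ⁅x, (e.symm : Module.End k s) y⁆
            = ⁅x, (a : Module.End k s) ((e.symm : Module.End k s) y)⁆ := haC x _
        have h3 : (a : Module.End k s) ((e.symm : Module.End k s) y) = y :=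
          e.apply_symm_apply y
        rw [h1, h2, h3]
      refine ⟨⟨(e.symm : Module.End k s), hinv⟩, ?_⟩
      apply Subtype.ext
      ext z
      exact e.apply_symm_apply z
  letI : Field C := hfield.toField
  -- s as a C-vector space
  letI instCMod : Module C s := Module.compHom s (C.val.toRingHom : C →+* Module.End k s)
  have smul_def : ∀ (c : C) (z : s), c • z = (c : Module.End k s) z := fun _ _ => rfl
  letI : IsScalarTower k C s := by
    constructor
    intro m c z
    rw [smul_def, smul_def]
    have : ((m • c : C) : Module.End k s) = m • (c : Module.End k s) := rfl
    rw [this]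
    simp
  have htower : Module.finrank k C * Module.finrank C s = 3 := by
    rw [@Module.finrank_mul_finrank k C s _ _ _ _ _ _ this]
    exact hdim
  have hdvd : Module.finrank k C ∣ 3 := ⟨_, htower.symm⟩
  rcases (Nat.prime_three.eq_one_or_self_of_dvd _ hdvd) with h1 | h3'
  · -- finrank k C = 1 : C = k • id
    have hbot : C = ⊥ := Subalgebra.eq_bot_of_finrank_one h1
    have hfC : f ∈ C := hf
    rw [hbot, Algebra.mem_bot] at hfC
    obtain ⟨c, hc⟩ := hfC
    refine ⟨c, ?_⟩
    rw [← hc, Module.algebraMap_end_eq_smul_id]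
  · -- finrank k C = 3 : impossible, s would be abelian
    exfalso
    have hr1 : Module.finrank C s = 1 := by
      rw [h3'] at htower
      omega
    obtain ⟨v, hv0, hv⟩ := finrank_eq_one_iff'.mp hr1
    apply LieAlgebra.IsSimple.non_abelian k (L := s)
    constructor
    intro x y
    obtain ⟨a, rfl⟩ := hv x
    obtain ⟨b, rfl⟩ := hv y
    show ⁅(a : Module.End k s) v, (b : Module.End k s) v⁆ = 0
    rw [← stmt17_lie_left a.2, ← b.2 v v]
    simp
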